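/- arXiv:2007.13817 — 3 statements merged into one kernel-verified Lean document; each statement's English description precedes it below -/
import Mathlib

section
/- Let p be a prime and n ≥ 1 an integer, and set s := v_p(n) + 1, where v_p denotes the p-adic valuation. In the power series ring ℤ_p[[T]], with q := 1 + T, the ideal generated by the q-integer [pn]_q equals the ideal generated by [p^s]_q. (This identity relates the quotient W(R)/[pn]_{q^{1/p}} appearing in Theorem 1.1 to the p-power q-integers [p^{h+1}]_{q^{1/p}} appearing in Theorem 1.3.) -/
open Polynomial

/-- The `q`-integer `[n]_q = 1 + q + ⋯ + q^{n-1}` as a polynomial in `ℤ[q]`. -/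
noncomputable def qInt (n : ℕ) : Polynomial ℤ :=
  ∑ k ∈ Finset.range n, X ^ k

/-- The image of a polynomial `f ∈ ℤ[q]` in `ℤ_p[[T]]` under the substitution `q := 1 + T`. -/
noncomputable def toPS (p : ℕ) [Fact p.Prime] (f : Polynomial ℤ) :
    PowerSeries (PadicInt p) :=
  Polynomial.aeval (1 + PowerSeries.X) f

lemma qInt_mul (a b : ℕ) : qInt (a * b) = qInt a * (qInt b).comp (X ^ a) := by
  have hX : (X - 1 : Polynomial ℤ) ≠ 0 := by
    simpa using Polynomial.X_sub_C_ne_zero (1 : ℤ)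
  apply mul_right_cancel₀ hX
  have h1 : qInt (a * b) * (X - 1) = X ^ (a * b) - 1 := geom_sum_mul X (a * b)
  have h2 : qInt a * (X - 1) = X ^ a - 1 := geom_sum_mul X a
  have h3 : qInt b * (X - 1) = X ^ b - 1 := geom_sum_mul X b
  rw [h1]
  symm
  calc qInt a * (qInt b).comp (X ^ a) * (X - 1)
      = (qInt b).comp (X ^ a) * (qInt a * (X - 1)) := by ring
    _ = (qInt b).comp (X ^ a) * (((X - 1 : Polynomial ℤ)).comp (X ^ a)) := by
        rw [h2]; simp [sub_comp]
    _ = ((qInt b) * (X - 1)).comp (X ^ a) := by rw [mul_comp]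
    _ = X ^ (a * b) - 1 := by rw [h3]; simp [sub_comp, pow_comp, ← pow_mul]

lemma qInt_eval_one (m : ℕ) : (qInt m).eval 1 = m := by
  simp [qInt]

lemma constantCoeff_toPS (p : ℕ) [Fact p.Prime] (f : Polynomial ℤ) :
    PowerSeries.constantCoeff (toPS p f) = ((f.eval 1 : ℤ) : PadicInt p) := by
  rw [toPS, Polynomial.aeval_def, Polynomial.hom_eval₂]
  have : PowerSeries.constantCoeff (1 + PowerSeries.X : PowerSeries (PadicInt p)) = 1 := by simp
  rw [this, Polynomial.eval₂_at_one]
  rfl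

/-- for a prime `p`, `n ≥ 1`, and `s := v_p(n) + 1`, in `ℤ_p[[T]]`
(with `q := 1 + T`) the ideal generated by `[pn]_q` equals the ideal generated by `[p^s]_q`. -/
theorem span_toPS_qInt_p_mul (p : ℕ) [Fact p.Prime] (n : ℕ) (hn : 1 ≤ n) :
    Ideal.span {toPS p (qInt (p * n))} =
      Ideal.span {toPS p (qInt (p ^ (padicValNat p n + 1)))} := by
  have hp : p.Prime := Fact.out
  have hn0 : n ≠ 0 := by omega
  set v := padicValNat p n with hv
  set m := ordCompl[p] n with hm
  have hfac : n.factorization p = v := Nat.factorization_def n hp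
  have hmdvd : ¬ p ∣ m := by
    have := Nat.not_dvd_ordCompl hp hn0
    simpa [hm] using this
  have hsplit : p * n = p ^ (v + 1) * m := by
    have := Nat.ordProj_mul_ordCompl_eq_self n p
    rw [hfac] at this
    rw [← this, hm, hfac]; ring
  rw [hsplit, qInt_mul]
  have := map_mul (Polynomial.aeval (1 + PowerSeries.X : PowerSeries (PadicInt p)))
    (qInt (p ^ (v + 1))) ((qInt m).comp (X ^ p ^ (v + 1)))
  show Ideal.span {toPS p (qInt (p ^ (v + 1)) * (qInt m).comp (X ^ p ^ (v + 1)))} = _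
  have hmul : toPS p (qInt (p ^ (v + 1)) * (qInt m).comp (X ^ p ^ (v + 1)))
      = toPS p (qInt (p ^ (v + 1))) * toPS p ((qInt m).comp (X ^ p ^ (v + 1))) := by
    simp only [toPS]; exact this
  rw [hmul]
  apply Ideal.span_singleton_mul_right_unit
  rw [PowerSeries.isUnit_iff_constantCoeff, constantCoeff_toPS]
  have heval : ((qInt m).comp (X ^ p ^ (v + 1))).eval 1 = (m : ℤ) := by
    rw [Polynomial.eval_comp]
    simp [qInt_eval_one]
  rw [heval]
  rw [PadicInt.isUnit_iff]
  apply le_antisymm (PadicInt.norm_le_one _)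
  by_contra h
  have hlt : ‖((m : ℤ) : PadicInt p)‖ < 1 := not_le.mp h
  rw [PadicInt.norm_int_lt_one_iff_dvd] at hlt
  exact hmdvd (by exact_mod_cast hlt)
end

section
/- Let p be a prime and n ≥ 1 an integer. In the power series ring ℤ_p[[T]], with q := 1 + T, the ideal generated by the q-factorial [n]_q! equals the ideal generated by ∏_{k=1}^{n} [p^{v_p(k)}]_q. (This is the q-analogue of Legendre's formula for the p-adic valuation of a factorial, the instance (a) of the floor-function phenomenon highlighted in the paper.) -/
open Polynomial

/-- The `q`-factorial `[n]_q! = ∏_{k=1}^n [k]_q`. -/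
noncomputable def qFact (n : ℕ) : Polynomial ℤ :=
  ∏ k ∈ Finset.Icc 1 n, qInt k

lemma qInt_add (m n : ℕ) : qInt (m + n) = qInt m + X ^ m * qInt n := by
  simp only [qInt, Finset.sum_range_add, Finset.mul_sum, ← pow_add]

lemma qInt_one : qInt 1 = 1 := by simp [qInt]

lemma isUnit_comp (p : ℕ) [Fact p.Prime] (m a : ℕ) (hm : ¬ (p ∣ m)) :
    IsUnit (toPS p ((qInt m).comp (X ^ a))) := by
  rw [PowerSeries.isUnit_iff_constantCoeff]
  have h : (PowerSeries.constantCoeff (R := PadicInt p)) (toPS p ((qInt m).comp (X ^ a)))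
      = (m : PadicInt p) := by
    rw [toPS, aeval_comp, map_pow, aeval_X]
    simp [qInt, map_sum, map_pow]
  rw [h, PadicInt.isUnit_iff]
  have hle : ‖((m : ℤ) : PadicInt p)‖ ≤ 1 := PadicInt.norm_le_one _
  have hlt : ¬ ‖((m : ℤ) : PadicInt p)‖ < 1 := by
    rw [PadicInt.norm_int_lt_one_iff_dvd]
    exact_mod_cast hm
  push_cast at hle hlt ⊢
  linarith [lt_or_eq_of_le hle]

lemma assoc_qInt (p : ℕ) [Fact p.Prime] (k : ℕ) (hk : 1 ≤ k) :
    Associated (toPS p (qInt k)) (toPS p (qInt (p ^ padicValNat p k))) := by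
  have hp := (Fact.out : p.Prime)
  have hk0 : k ≠ 0 := by omega
  set v := padicValNat p k
  have hfac : k = p ^ v * (k / p ^ v) := by
    have := Nat.ordProj_mul_ordCompl_eq_self k p
    rw [Nat.factorization_def k hp] at this
    exact this.symm
  have hnd : ¬ p ∣ (k / p ^ v) := by
    have := Nat.not_dvd_ordCompl hp hk0
    rwa [Nat.factorization_def k hp] at this
  have heq : toPS p (qInt k) = toPS p (qInt (p ^ v)) *
      toPS p ((qInt (k / p ^ v)).comp (X ^ p ^ v)) := by
    conv_lhs => rw [hfac, qInt_mul]
    simp only [toPS, map_mul]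
  rw [heq]
  exact associated_mul_unit_left _ _ (isUnit_comp p _ _ hnd)

/-- `q`-Legendre: for a prime `p` and `n ≥ 1`, in `ℤ_p[[T]]` (with `q := 1 + T`)
the ideal generated by `[n]_q!` equals the ideal generated by `∏_{k=1}^{n} [p^{v_p(k)}]_q`. -/
theorem span_toPS_qFact_eq_q_legendre (p : ℕ) [Fact p.Prime] (n : ℕ) (hn : 1 ≤ n) :
    Ideal.span {toPS p (qFact n)} =
      Ideal.span {toPS p (∏ k ∈ Finset.Icc 1 n, qInt (p ^ padicValNat p k))} := by
  rw [Ideal.span_singleton_eq_span_singleton]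
  rw [qFact]
  simp only [toPS, map_prod]
  exact Associated.prod _ _ _ (fun k hk => assoc_qInt p k (Finset.mem_Icc.mp hk).1)
end

section
/- Let p be a prime and i, j ≥ 1 integers. Let r be the least natural number with i + j ≤ p^r · i (i.e., r = ⌈log_p((i+j)/i)⌉; note r ≥ 1), and set M := ⌊(i+j−1)/p^{r−1}⌋. Then in the power series ring ℤ_p[[T]], with q := 1 + T, the element [p^r]_q^{i−1} · ∏_{m=1}^{M} [m]_{q^{p^r}} divides the q-factorial [p(i+j−1)]_q!. (This divisibility makes well-defined the generator [p(i+j−1)]_{q^{1/p}}! / ([p^r]_{q^{1/p}}^{i−1} φ^r([⌊(i+j−1)/p^{r−1}⌋]_{q^{1/p}}!)) of the slice filtration F^{2j}_S π_{2i} TF(R;ℤ_p) in Theorem 1.2, since φ^r([M]_q!) = ∏_{m=1}^{M} [m]_{q^{p^r}} where φ is the Frobenius q ↦ q^p.) -/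
open Polynomial

lemma qInt_mul_X_sub_one (n : ℕ) : qInt n * (X - 1) = X ^ n - 1 := by
  simpa [qInt] using geom_sum_mul (X : Polynomial ℤ) n

lemma qInt_comp_mul (m a : ℕ) :
    (qInt m).comp (X ^ a) * qInt a = qInt (m * a) := by
  have hX : (X - 1 : Polynomial ℤ) ≠ 0 := by
    intro h
    have := congrArg (Polynomial.eval 0) h
    simp at this
  apply mul_right_cancel₀ hX
  calc (qInt m).comp (X ^ a) * qInt a * (X - 1)
      = (qInt m).comp (X ^ a) * (X ^ a - 1) := by
        rw [mul_assoc, qInt_mul_X_sub_one]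
    _ = ((qInt m) * (X - 1)).comp (X ^ a) := by
        simp [Polynomial.mul_comp, Polynomial.sub_comp]
    _ = X ^ (m * a) - 1 := by
        rw [qInt_mul_X_sub_one]
        simp [Polynomial.sub_comp, Polynomial.pow_comp, ← pow_mul, mul_comm]
    _ = qInt (m * a) * (X - 1) := (qInt_mul_X_sub_one _).symm

/-- let `p` be a prime, `i, j ≥ 1`, let `r` be the least natural number with
`i + j ≤ p^r · i` (so `r = ⌈log_p((i+j)/i)⌉`), and set `M := ⌊(i+j−1)/p^{r−1}⌋`. Then in
`ℤ_p[[T]]` (with `q := 1 + T`) the element `[p^r]_q^{i−1} · ∏_{m=1}^{M} [m]_{q^{p^r}}`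
divides `[p(i+j−1)]_q!`. -/
theorem toPS_dvd_qFact (p : ℕ) [Fact p.Prime] (i j r : ℕ) (hi : 1 ≤ i) (hj : 1 ≤ j)
    (hr : i + j ≤ p ^ r * i) (hrmin : ∀ r' : ℕ, r' < r → ¬ (i + j ≤ p ^ r' * i)) :
    toPS p (qInt (p ^ r) ^ (i - 1) *
        ∏ m ∈ Finset.Icc 1 ((i + j - 1) / p ^ (r - 1)), (qInt m).comp (X ^ p ^ r)) ∣
      toPS p (qFact (p * (i + j - 1))) := by
  have hp : 1 < p := (Fact.out : p.Prime).one_lt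
  have hr1 : 1 ≤ r := by
    rcases Nat.eq_zero_or_pos r with h0 | h; · simp [h0] at hr; omega
    exact h
  set M := (i + j - 1) / p ^ (r - 1) with hM
  have hpr1 : 0 < p ^ (r - 1) := Nat.pow_pos (by omega)
  have hpr : 0 < p ^ r := Nat.pow_pos (by omega)
  have hmin : ¬ (i + j ≤ p ^ (r - 1) * i) := hrmin (r - 1) (by omega)
  have hiM : i ≤ M := by
    rw [hM, Nat.le_div_iff_mul_le hpr1]
    push_neg at hmin
    rw [mul_comm]
    omega
  have hprr : p ^ r = p ^ (r - 1) * p := by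
    rw [← pow_succ]; congr 1; omega
  have hMN : M * p ^ r ≤ p * (i + j - 1) := by
    have h1 : M * p ^ (r - 1) ≤ i + j - 1 := Nat.div_mul_le_self _ _
    calc M * p ^ r = M * p ^ (r - 1) * p := by rw [hprr, mul_assoc]
      _ ≤ (i + j - 1) * p := Nat.mul_le_mul_right _ h1
      _ = p * (i + j - 1) := mul_comm _ _
  -- divisibility in ℤ[X]
  have key : qInt (p ^ r) ^ (i - 1) *
      ∏ m ∈ Finset.Icc 1 M, (qInt m).comp (X ^ p ^ r) ∣ qFact (p * (i + j - 1)) := by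
    have hsub : (Finset.Icc 1 M).image (· * p ^ r) ⊆ Finset.Icc 1 (p * (i + j - 1)) := by
      intro x hx
      simp only [Finset.mem_image, Finset.mem_Icc] at hx ⊢
      obtain ⟨m, ⟨hm1, hm2⟩, rfl⟩ := hx
      constructor
      · exact Nat.one_le_iff_ne_zero.mpr (by positivity)
      · exact le_trans (Nat.mul_le_mul_right _ hm2) hMN
    have hinj : Set.InjOn (· * p ^ r) (Finset.Icc 1 M) := fun a _ b _ h => by
      exact Nat.eq_of_mul_eq_mul_right hpr h
    have h1 : ∏ m ∈ Finset.Icc 1 M, qInt (m * p ^ r) ∣ qFact (p * (i + j - 1)) := by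
      rw [qFact]
      have := Finset.prod_dvd_prod_of_subset ((Finset.Icc 1 M).image (· * p ^ r))
        (Finset.Icc 1 (p * (i + j - 1))) qInt hsub
      rwa [Finset.prod_image hinj] at this
    refine dvd_trans ?_ h1
    have h2 : ∏ m ∈ Finset.Icc 1 M, qInt (m * p ^ r) =
        (∏ m ∈ Finset.Icc 1 M, (qInt m).comp (X ^ p ^ r)) * qInt (p ^ r) ^ M := by
      have hcard : (Finset.Icc 1 M).card = M := by rw [Nat.card_Icc]; omega
      calc ∏ m ∈ Finset.Icc 1 M, qInt (m * p ^ r)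
          = ∏ m ∈ Finset.Icc 1 M, ((qInt m).comp (X ^ p ^ r) * qInt (p ^ r)) :=
            Finset.prod_congr rfl fun m _ => (qInt_comp_mul m (p ^ r)).symm
        _ = (∏ m ∈ Finset.Icc 1 M, (qInt m).comp (X ^ p ^ r)) *
              ∏ _m ∈ Finset.Icc 1 M, qInt (p ^ r) := Finset.prod_mul_distrib
        _ = (∏ m ∈ Finset.Icc 1 M, (qInt m).comp (X ^ p ^ r)) * qInt (p ^ r) ^ M := by
            rw [Finset.prod_const, hcard]
    rw [h2, mul_comm (qInt (p ^ r) ^ (i - 1))]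
    exact mul_dvd_mul dvd_rfl (pow_dvd_pow _ (by omega))
  unfold toPS
  exact map_dvd (Polynomial.aeval (1 + PowerSeries.X)) key
end
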